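/- arXiv:2408.16282 — 5 statements merged into one kernel-verified Lean document; each statement's English description precedes it below -/
import Mathlib

section
/- Let E be a finite-dimensional real inner product space with induced norm ‖·‖_a, and let ‖·‖_b be another norm on E satisfying b₁‖v‖_b ≤ ‖v‖_a ≤ b₂‖v‖_b for all v ∈ E, with constants b₁, b₂ > 0. Let T : E → E be a linear map and Λ a constant with 0 ≤ Λ < 1 such that ‖v − T(v)‖_a ≤ Λ‖v‖_a for all v ∈ E. Then for any u, u⁰ ∈ E and every j ≥ 1, with K_j := span{T(u − u⁰), T²(u − u⁰), …, Tʲ(u − u⁰)}, one has inf_{v ∈ u⁰ + K_j} ‖T(u − v)‖_b ≤ Λʲ · ((1 + Λ)/(1 − Λ)) · (b₂/b₁) · ‖T(u − u⁰)‖_b. -/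
lemma span_step {E : Type*} [NormedAddCommGroup E] [InnerProductSpace ℝ E]
    (T : E →ₗ[ℝ] E) (e : E) (j : ℕ) :
    ((1 - T) ^ j) e - e ∈ Submodule.span ℝ
      ((fun m : ℕ => (T ^ m) e) '' Set.Icc 1 j) := by
  induction j with
  | zero => simp
  | succ j ih =>
      have hmono : Submodule.span ℝ ((fun m : ℕ => (T ^ m) e) '' Set.Icc 1 j) ≤
          Submodule.span ℝ ((fun m : ℕ => (T ^ m) e) '' Set.Icc 1 (j+1)) :=
        Submodule.span_mono (Set.image_mono (Set.Icc_subset_Icc_right (by omega)))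
      set K := Submodule.span ℝ ((fun m : ℕ => (T ^ m) e) '' Set.Icc 1 (j+1)) with hK
      have hz : ((1 - T) ^ j) e - e ∈ K := hmono ih
      have hTz : T (((1 - T) ^ j) e - e) ∈ K := by
        have : T (((1 - T) ^ j) e - e) ∈ Submodule.map T
            (Submodule.span ℝ ((fun m : ℕ => (T ^ m) e) '' Set.Icc 1 j)) :=
          Submodule.mem_map_of_mem ih
        rw [Submodule.map_span] at this
        refine Submodule.span_le.mpr ?_ this
        rintro x ⟨y, ⟨m, hm, rfl⟩, rfl⟩
        obtain ⟨hm1, hm2⟩ := hm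
        refine Submodule.subset_span ⟨m + 1, ⟨by omega, by omega⟩, ?_⟩
        simp only [Module.End.pow_apply]
        exact Function.iterate_succ_apply' _ _ _
      have hTe : T e ∈ K := by
        refine Submodule.subset_span ⟨1, ⟨le_refl 1, by omega⟩, by simp⟩
      have key : ((1 - T) ^ (j+1)) e - e
          = (((1 - T) ^ j) e - e) - T (((1 - T) ^ j) e - e) - T e := by
        have : ((1 - T) ^ (j+1)) e = (1 - T) (((1 - T) ^ j) e) := by
          rw [pow_succ']; rfl
        rw [this]
        simp only [LinearMap.sub_apply, Module.End.one_apply, map_sub]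
        abel
      rw [key]
      exact K.sub_mem (K.sub_mem hz hTz) hTe

/-- Convergence rate of preconditioned GMRES: the j-th GMRES residual (in the b-norm)
    is bounded by Λʲ · ((1+Λ)/(1−Λ)) · (b₂/b₁) times the initial residual. -/
theorem gmres_convergence_rate {E : Type*} [NormedAddCommGroup E] [InnerProductSpace ℝ E]
    [FiniteDimensional ℝ E]
    (nb : E → ℝ) (b1 b2 : ℝ) (hb1 : 0 < b1) (hb2 : 0 < b2)
    (hnb : ∀ v : E, b1 * nb v ≤ ‖v‖ ∧ ‖v‖ ≤ b2 * nb v)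
    (T : E →ₗ[ℝ] E) (Λ : ℝ) (hΛ0 : 0 ≤ Λ) (hΛ1 : Λ < 1)
    (hT : ∀ v : E, ‖v - T v‖ ≤ Λ * ‖v‖)
    (u u0 : E) (j : ℕ) (hj : 1 ≤ j) :
    sInf {r : ℝ | ∃ w ∈ Submodule.span ℝ
          ((fun m : ℕ => (T ^ m) (u - u0)) '' Set.Icc 1 j),
        r = nb (T (u - (u0 + w)))}
      ≤ Λ ^ j * ((1 + Λ) / (1 - Λ)) * (b2 / b1) * nb (T (u - u0)) := by
  set e := u - u0 with he
  have hnb0 : ∀ v : E, 0 ≤ nb v := fun v =>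
    nonneg_of_mul_nonneg_right ((norm_nonneg v).trans (hnb v).2) hb2
  -- choose w
  set w : E := -(((1 - T) ^ j) e - e) with hw
  have hwmem : w ∈ Submodule.span ℝ ((fun m : ℕ => (T ^ m) e) '' Set.Icc 1 j) :=
    Submodule.neg_mem _ (span_step T e j)
  have hres : u - (u0 + w) = ((1 - T) ^ j) e := by
    rw [hw]; rw [he] at *; abel
  -- norm bounds
  have hpow : ∀ k : ℕ, ‖((1 - T) ^ k) e‖ ≤ Λ ^ k * ‖e‖ := by
    intro k
    induction k with
    | zero => simp
    | succ k ih =>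
        have h1 : ((1 - T) ^ (k+1)) e = ((1 - T) ^ k) e - T (((1 - T) ^ k) e) := by
          rw [pow_succ']; simp [Module.End.mul_apply]
        rw [h1]
        calc ‖((1 - T) ^ k) e - T (((1 - T) ^ k) e)‖ ≤ Λ * ‖((1 - T) ^ k) e‖ := hT _
          _ ≤ Λ * (Λ ^ k * ‖e‖) := by nlinarith
          _ = Λ ^ (k+1) * ‖e‖ := by ring
  have hTbnd : ∀ x : E, ‖T x‖ ≤ (1 + Λ) * ‖x‖ := by
    intro x
    have := hT x
    have h2 : ‖T x‖ ≤ ‖x‖ + ‖x - T x‖ := by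
      have := norm_sub_le x (x - T x); simpa using this
    nlinarith
  have hee : (1 - Λ) * ‖e‖ ≤ ‖T e‖ := by
    have h1 := hT e
    have h2 : ‖e‖ - ‖T e‖ ≤ ‖e - T e‖ := norm_sub_norm_le _ _
    nlinarith
  -- the value A
  set A := nb (T (u - (u0 + w))) with hA
  have hAset : A ∈ {r : ℝ | ∃ w ∈ Submodule.span ℝ
          ((fun m : ℕ => (T ^ m) (u - u0)) '' Set.Icc 1 j),
        r = nb (T (u - (u0 + w)))} := ⟨w, hwmem, rfl⟩
  have hbdd : BddBelow {r : ℝ | ∃ w ∈ Submodule.span ℝ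
          ((fun m : ℕ => (T ^ m) (u - u0)) '' Set.Icc 1 j),
        r = nb (T (u - (u0 + w)))} := by
    refine ⟨0, ?_⟩
    rintro r ⟨w', _, rfl⟩
    exact hnb0 _
  refine (csInf_le hbdd hAset).trans ?_
  -- now bound A
  have hchain : b1 * A ≤ ‖T (((1 - T) ^ j) e)‖ := by
    rw [hA, hres]; exact (hnb _).1
  have h1 : ‖T (((1 - T) ^ j) e)‖ ≤ (1 + Λ) * (Λ ^ j * ‖e‖) := by
    calc ‖T (((1 - T) ^ j) e)‖ ≤ (1 + Λ) * ‖((1 - T) ^ j) e‖ := hTbnd _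
      _ ≤ (1 + Λ) * (Λ ^ j * ‖e‖) := by nlinarith [hpow j, norm_nonneg e]
  have h2 : (1 - Λ) * ‖e‖ ≤ b2 * nb (T e) := hee.trans (hnb (T e)).2
  have hΛ1' : 0 < 1 - Λ := by linarith
  have hpj : 0 ≤ Λ ^ j := pow_nonneg hΛ0 j
  have hnbTe : 0 ≤ nb (T e) := hnb0 _
  -- combine: b1 * A ≤ (1+Λ) * Λ^j * ‖e‖ and (1-Λ)‖e‖ ≤ b2 nb(Te)
  have key : (1 - Λ) * (b1 * A) ≤ Λ ^ j * (1 + Λ) * (b2 * nb (T e)) := by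
    nlinarith [mul_le_mul_of_nonneg_left hchain hΛ1'.le,
      mul_le_mul_of_nonneg_left h1 hΛ1'.le,
      mul_le_mul_of_nonneg_left h2 (mul_nonneg (by linarith : (0:ℝ) ≤ 1 + Λ) hpj)]
  rw [show Λ ^ j * ((1 + Λ) / (1 - Λ)) * (b2 / b1) * nb (T e)
      = (Λ ^ j * (1 + Λ) * (b2 * nb (T e))) / ((1 - Λ) * b1) by field_simp,
    le_div_iff₀ (mul_pos hΛ1' hb1)]
  nlinarith [key]
end

section
/- Let E be a finite-dimensional real inner product space with induced norm ‖·‖_a, let ‖·‖_b be another norm on E with b₁‖v‖_b ≤ ‖v‖_a ≤ b₂‖v‖_b for all v ∈ E (b₁, b₂ > 0), and let T : E → E be linear with ‖v − T(v)‖_a ≤ Λ‖v‖_a for all v ∈ E, where 0 < Λ < 1. Let k ∈ ℕ be such that ((1 + Λ)/(1 − Λ)) · (b₂/b₁) · Λᵏ ≤ 1. Then for any u, u⁰ ∈ E and every j ≥ 1, with K_m := span{T(u − u⁰), …, Tᵐ(u − u⁰)}, one has inf_{v ∈ u⁰ + K_{j+k}} ‖T(u − v)‖_b ≤ Λʲ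 ‖T(u − u⁰)‖_b. -/
/-- Preconditioned GMRES: after a lag of k steps (with
    ((1+Λ)/(1−Λ))·(b₂/b₁)·Λᵏ ≤ 1), the residual at step j+k is bounded by
    Λʲ times the initial residual. -/
theorem gmres_convergence_with_lag {E : Type*} [NormedAddCommGroup E] [InnerProductSpace ℝ E]
    [FiniteDimensional ℝ E]
    (nb : E → ℝ) (b1 b2 : ℝ) (hb1 : 0 < b1) (hb2 : 0 < b2)
    (hnb : ∀ v : E, b1 * nb v ≤ ‖v‖ ∧ ‖v‖ ≤ b2 * nb v)
    (T : E →ₗ[ℝ] E) (Λ : ℝ) (hΛ0 : 0 < Λ) (hΛ1 : Λ < 1)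
    (hT : ∀ v : E, ‖v - T v‖ ≤ Λ * ‖v‖)
    (k : ℕ) (hk : ((1 + Λ) / (1 - Λ)) * (b2 / b1) * Λ ^ k ≤ 1)
    (u u0 : E) (j : ℕ) (hj : 1 ≤ j) :
    sInf {r : ℝ | ∃ w ∈ Submodule.span ℝ
          ((fun m : ℕ => (T ^ m) (u - u0)) '' Set.Icc 1 (j + k)),
        r = nb (T (u - (u0 + w)))}
      ≤ Λ ^ j * nb (T (u - u0)) := by
  set e := u - u0 with he
  set S : E →ₗ[ℝ] E := 1 - T with hS
  -- basic facts about nb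
  have hnbnn : ∀ v : E, 0 ≤ nb v := by
    intro v
    have h1 := (hnb v).2
    have h2 := norm_nonneg v
    nlinarith
  -- S commutes with T
  have hScomm : Commute S T := by
    simpa [hS] using (Commute.one_left T).sub_left (Commute.refl T)
  -- contraction property of S
  have hSnorm : ∀ x : E, ‖S x‖ ≤ Λ * ‖x‖ := by
    intro x
    simpa [hS, LinearMap.sub_apply] using hT x
  have hSn : ∀ (n : ℕ) (x : E), ‖(S ^ n) x‖ ≤ Λ ^ n * ‖x‖ := by
    intro n
    induction n with
    | zero => intro x; simp
    | succ n ih =>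
      intro x
      have h1 : (S ^ (n + 1)) x = (S ^ n) (S x) := by
        rw [pow_succ, Module.End.mul_apply]
      calc ‖(S ^ (n + 1)) x‖ = ‖(S ^ n) (S x)‖ := by rw [h1]
        _ ≤ Λ ^ n * ‖S x‖ := ih (S x)
        _ ≤ Λ ^ n * (Λ * ‖x‖) :=
            mul_le_mul_of_nonneg_left (hSnorm x) (pow_nonneg hΛ0.le n)
        _ = Λ ^ (n + 1) * ‖x‖ := by rw [pow_succ]; ring
  -- membership lemma Q : S^n (T e) lies in the span over Icc 1 (n+1)
  have hQ : ∀ n : ℕ, (S ^ n) (T e) ∈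
      Submodule.span ℝ ((fun m : ℕ => (T ^ m) e) '' Set.Icc 1 (n + 1)) := by
    intro n
    induction n with
    | zero =>
      apply Submodule.subset_span
      exact ⟨1, by simp, by simp⟩
    | succ n ih =>
      have h1 : (S ^ (n + 1)) (T e) = (S ^ n) (T e) - T ((S ^ n) (T e)) := by
        rw [pow_succ', Module.End.mul_apply]
        simp [hS, LinearMap.sub_apply]
      rw [h1]
      have hmono : Submodule.span ℝ ((fun m : ℕ => (T ^ m) e) '' Set.Icc 1 (n + 1)) ≤
          Submodule.span ℝ ((fun m : ℕ => (T ^ m) e) '' Set.Icc 1 (n + 2)) :=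
        Submodule.span_mono (Set.image_mono (Set.Icc_subset_Icc_right (by omega)))
      refine sub_mem (hmono ih) ?_
      have hTim := Submodule.apply_mem_span_image_of_mem_span (s := (fun m : ℕ => (T ^ m) e) '' Set.Icc 1 (n + 1)) T ih
      refine Submodule.span_le.mpr ?_ hTim
      rintro x ⟨y, ⟨m, hm, rfl⟩, rfl⟩
      rw [Set.mem_Icc] at hm
      apply Submodule.subset_span
      refine ⟨m + 1, ⟨by omega, by omega⟩, ?_⟩
      simp only [pow_succ', Module.End.mul_apply]
  -- membership lemma P : e - S^n e lies in the span over Icc 1 n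
  have hP : ∀ n : ℕ, e - (S ^ n) e ∈
      Submodule.span ℝ ((fun m : ℕ => (T ^ m) e) '' Set.Icc 1 n) := by
    intro n
    induction n with
    | zero => simp
    | succ n ih =>
      have h1 : (S ^ (n + 1)) e = (S ^ n) e - (S ^ n) (T e) := by
        rw [pow_succ, Module.End.mul_apply]
        have : S e = e - T e := by simp [hS, LinearMap.sub_apply]
        rw [this, map_sub]
      have h2 : e - (S ^ (n + 1)) e = (e - (S ^ n) e) + (S ^ n) (T e) := by
        rw [h1]; abel
      rw [h2]
      have hmono : Submodule.span ℝ ((fun m : ℕ => (T ^ m) e) '' Set.Icc 1 n) ≤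
          Submodule.span ℝ ((fun m : ℕ => (T ^ m) e) '' Set.Icc 1 (n + 1)) :=
        Submodule.span_mono (Set.image_mono (Set.Icc_subset_Icc_right (by omega)))
      exact add_mem (hmono ih) (hQ n)
  -- the chosen element
  set n := j + k with hn
  set w : E := e - (S ^ n) e with hw
  have hwmem : w ∈ Submodule.span ℝ ((fun m : ℕ => (T ^ m) e) '' Set.Icc 1 (j + k)) := hP n
  have hres : T (u - (u0 + w)) = (S ^ n) (T e) := by
    have h1 : u - (u0 + w) = (S ^ n) e := by
      rw [hw]; rw [he] at *; abel
    rw [h1]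
    have h2 : Commute T (S ^ n) := (hScomm.symm).pow_right n
    calc T ((S ^ n) e) = (T * S ^ n) e := rfl
      _ = (S ^ n * T) e := by rw [h2.eq]
      _ = (S ^ n) (T e) := rfl
  -- the key constant inequality : b2 * Λ^k ≤ b1
  have hΛk : (0:ℝ) < Λ ^ k := pow_pos hΛ0 k
  have h1Λ : (0:ℝ) < 1 - Λ := by linarith
  have hfrac : (1:ℝ) ≤ (1 + Λ) / (1 - Λ) := by
    rw [le_div_iff₀ h1Λ]; linarith
  have h2 : b2 / b1 * Λ ^ k ≤ 1 := by
    calc b2 / b1 * Λ ^ k ≤ ((1 + Λ) / (1 - Λ)) * (b2 / b1 * Λ ^ k) :=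
          le_mul_of_one_le_left (by positivity) hfrac
      _ = ((1 + Λ) / (1 - Λ)) * (b2 / b1) * Λ ^ k := by ring
      _ ≤ 1 := hk
  have hkey : b2 * Λ ^ k ≤ b1 := by
    rw [div_mul_eq_mul_div, div_le_one hb1] at h2
    exact h2
  -- the final bound for the chosen element
  set X : E := (S ^ n) (T e) with hX
  have hbound : nb X ≤ Λ ^ j * nb (T e) := by
    have hr1 : b1 * nb X ≤ ‖X‖ := (hnb X).1
    have hr2 : ‖X‖ ≤ Λ ^ n * ‖T e‖ := hSn n (T e)
    have hr3 : ‖T e‖ ≤ b2 * nb (T e) := (hnb (T e)).2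
    have hchain : b1 * nb X ≤ b1 * (Λ ^ j * nb (T e)) := by
      calc b1 * nb X ≤ ‖X‖ := hr1
        _ ≤ Λ ^ n * ‖T e‖ := hr2
        _ ≤ Λ ^ n * (b2 * nb (T e)) :=
            mul_le_mul_of_nonneg_left hr3 (pow_nonneg hΛ0.le n)
        _ = Λ ^ j * ((b2 * Λ ^ k) * nb (T e)) := by rw [hn, pow_add]; ring
        _ ≤ Λ ^ j * (b1 * nb (T e)) := by
            apply mul_le_mul_of_nonneg_left _ (pow_nonneg hΛ0.le j)
            exact mul_le_mul_of_nonneg_right hkey (hnbnn _)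
        _ = b1 * (Λ ^ j * nb (T e)) := by ring
    exact le_of_mul_le_mul_left hchain hb1
  -- conclude via csInf_le
  refine le_trans (csInf_le ?_ ?_) hbound
  · exact ⟨0, by rintro r ⟨w', hw', rfl⟩; exact hnbnn _⟩
  · exact ⟨w, hwmem, by rw [hres]⟩
end

section
/- Let E be a real inner product space, let w₁, …, w_M ∈ E, and suppose there is a coloring c : {1, …, M} → {1, …, ζ} such that ⟨w_i, w_j⟩ = 0 whenever i ≠ j and c(i) = c(j). Then ‖∑_{i=1}^M w_i‖² ≤ ζ · ∑_{i=1}^M ‖w_i‖². -/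
/-- Coloring estimate: if vectors with the same color are pairwise orthogonal, then
    ‖∑ wᵢ‖² ≤ ζ · ∑ ‖wᵢ‖². -/
theorem coloring_sum_sq_estimate {E : Type*} [NormedAddCommGroup E] [InnerProductSpace ℝ E]
    (M ζ : ℕ) (w : Fin M → E) (c : Fin M → Fin ζ)
    (horth : ∀ i j : Fin M, i ≠ j → c i = c j → inner ℝ (w i) (w j) = (0 : ℝ)) :
    ‖∑ i, w i‖ ^ 2 ≤ (ζ : ℝ) * ∑ i, ‖w i‖ ^ 2 := by
  set S : Fin ζ → E := fun k => ∑ i ∈ Finset.univ.filter (fun i => c i = k), w i with hS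
  have hsum : ∑ i, w i = ∑ k, S k := by
    rw [hS, Finset.sum_fiberwise]
  have hSk : ∀ k, ‖S k‖ ^ 2 = ∑ i ∈ Finset.univ.filter (fun i => c i = k), ‖w i‖ ^ 2 := by
    intro k
    have : (inner ℝ (S k) (S k) : ℝ) = ∑ i ∈ Finset.univ.filter (fun i => c i = k), ‖w i‖ ^ 2 := by
      rw [hS, sum_inner]
      refine Finset.sum_congr rfl fun i hi => ?_
      rw [inner_sum]
      rw [Finset.sum_eq_single i]
      · rw [real_inner_self_eq_norm_sq]
      · intro j hj hji
        simp only [Finset.mem_filter] at hi hj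
        exact horth i j (Ne.symm hji) (hi.2.trans hj.2.symm)
      · intro h; exact absurd hi h
    rw [← real_inner_self_eq_norm_sq, this]
  calc ‖∑ i, w i‖ ^ 2 = ‖∑ k, S k‖ ^ 2 := by rw [hsum]
    _ ≤ (∑ k, ‖S k‖) ^ 2 := by
        have h1 : ‖∑ k, S k‖ ≤ ∑ k, ‖S k‖ := norm_sum_le _ _
        exact pow_le_pow_left₀ (norm_nonneg _) h1 2
    _ ≤ (ζ : ℝ) * ∑ k, ‖S k‖ ^ 2 := by
        have := sq_sum_le_card_mul_sum_sq (s := (Finset.univ : Finset (Fin ζ)))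
          (f := fun k => ‖S k‖)
        simpa using this
    _ = (ζ : ℝ) * ∑ i, ‖w i‖ ^ 2 := by
        congr 1
        rw [← Finset.sum_fiberwise Finset.univ c (fun i => ‖w i‖ ^ 2)]
        exact Finset.sum_congr rfl fun k _ => hSk k
end

section
/- Let E be a real inner product space and let χ₁, …, χ_M : E → E be linear maps with ∑_{i=1}^M χ_i = id_E. Suppose there is a coloring c : {1, …, M} → {1, …, ζ} such that for all i ≠ j with c(i) = c(j) one has ⟨χ_i(x), χ_j(y)⟩ = 0 for all x, y ∈ E. Let u ∈ E and suppose v₁, …, v_M ∈ E and ε₁, …, ε_M ≥ 0 satisfy ‖χ_i(u − v_i)‖ ≤ ε_i for each i. Then ‖u − ∑_{i=1}^M χ_i(v_i)‖ ≤ (ζ · ∑_{i=1}^M ε_i²)^{1/2}. -/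
/-- Abstract GFEM approximation theorem: local errors εᵢ glue to a global error
    (ζ ∑ εᵢ²)^{1/2} via a partition of unity with coloring constant ζ. -/
theorem gfem_global_approximation {E : Type*} [NormedAddCommGroup E] [InnerProductSpace ℝ E]
    (M ζ : ℕ) (χ : Fin M → E →ₗ[ℝ] E)
    (hsum : ∑ i, χ i = LinearMap.id)
    (c : Fin M → Fin ζ)
    (horth : ∀ i j : Fin M, i ≠ j → c i = c j →
      ∀ x y : E, inner ℝ (χ i x) (χ j y) = (0 : ℝ))
    (u : E) (v : Fin M → E) (ε : Fin M → ℝ) (hε : ∀ i, 0 ≤ ε i)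
    (hloc : ∀ i, ‖χ i (u - v i)‖ ≤ ε i) :
    ‖u - ∑ i, χ i (v i)‖ ≤ Real.sqrt ((ζ : ℝ) * ∑ i, ε i ^ 2) := by
  classical
  set w : Fin M → E := fun i => χ i (u - v i) with hw
  have hu : ∑ i, χ i u = u := by
    have := congrArg (fun f : E →ₗ[ℝ] E => f u) hsum
    simpa using this
  have hsplit : u - ∑ i, χ i (v i) = ∑ i, w i := by
    simp only [hw, map_sub]
    rw [Finset.sum_sub_distrib, hu]
  rw [hsplit]
  have hgroup : ∑ i, w i = ∑ k : Fin ζ, ∑ i ∈ Finset.univ.filter (fun i => c i = k), w i :=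
    (Finset.sum_fiberwise _ _ _).symm
  rw [hgroup]
  set b : Fin ζ → ℝ := fun k => ∑ i ∈ Finset.univ.filter (fun i => c i = k), ε i ^ 2 with hb
  have hbnn : ∀ k, 0 ≤ b k := fun k =>
    Finset.sum_nonneg fun i _ => sq_nonneg _
  have key : ∀ k : Fin ζ,
      ‖∑ i ∈ Finset.univ.filter (fun i => c i = k), w i‖ ≤ Real.sqrt (b k) := by
    intro k
    set s := Finset.univ.filter (fun i => c i = k) with hs
    have hcs : ∀ i ∈ s, c i = k := by
      intro i hi; simpa [hs] using hi
    have hsq : ‖∑ i ∈ s, w i‖ ^ 2 = ∑ i ∈ s, ‖w i‖ ^ 2 := by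
      have h1 : (inner ℝ (∑ i ∈ s, w i) (∑ j ∈ s, w j) : ℝ) = ∑ i ∈ s, inner ℝ (w i) (w i) := by
        rw [sum_inner]
        refine Finset.sum_congr rfl fun i hi => ?_
        rw [inner_sum]
        refine Finset.sum_eq_single_of_mem i hi (fun j hj hne => ?_)
        exact horth i j (fun h => hne h.symm) ((hcs i hi).trans (hcs j hj).symm) _ _
      have h2 := real_inner_self_eq_norm_sq (∑ i ∈ s, w i)
      rw [h1] at h2
      rw [← h2]
      exact Finset.sum_congr rfl fun i _ => real_inner_self_eq_norm_sq (w i)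
    have hle : ‖∑ i ∈ s, w i‖ ^ 2 ≤ b k := by
      rw [hsq, hb]
      exact Finset.sum_le_sum fun i _ =>
        pow_le_pow_left₀ (norm_nonneg _) (hloc i) 2
    calc ‖∑ i ∈ s, w i‖ = Real.sqrt (‖∑ i ∈ s, w i‖ ^ 2) := (Real.sqrt_sq (norm_nonneg _)).symm
      _ ≤ Real.sqrt (b k) := Real.sqrt_le_sqrt hle
  calc ‖∑ k : Fin ζ, ∑ i ∈ Finset.univ.filter (fun i => c i = k), w i‖
      ≤ ∑ k : Fin ζ, ‖∑ i ∈ Finset.univ.filter (fun i => c i = k), w i‖ :=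
        norm_sum_le _ _
    _ ≤ ∑ k : Fin ζ, Real.sqrt (b k) := Finset.sum_le_sum fun k _ => key k
    _ ≤ Real.sqrt ((ζ : ℝ) * ∑ i, ε i ^ 2) := by
        have hcard : (Finset.univ : Finset (Fin ζ)).card = ζ := Finset.card_fin ζ
        have hsb : ∑ k : Fin ζ, b k = ∑ i, ε i ^ 2 := Finset.sum_fiberwise _ _ _
        have hcs := sq_sum_le_card_mul_sum_sq (s := (Finset.univ : Finset (Fin ζ)))
          (f := fun k => Real.sqrt (b k))
        rw [hcard] at hcs
        have hsq : ∀ k : Fin ζ, Real.sqrt (b k) ^ 2 = b k := fun k => Real.sq_sqrt (hbnn k)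
        have hcs' : (∑ k : Fin ζ, Real.sqrt (b k)) ^ 2 ≤ (ζ : ℝ) * ∑ i, ε i ^ 2 := by
          calc (∑ k : Fin ζ, Real.sqrt (b k)) ^ 2 ≤ (ζ : ℝ) * ∑ k : Fin ζ, Real.sqrt (b k) ^ 2 := by
                exact_mod_cast hcs
            _ = (ζ : ℝ) * ∑ i, ε i ^ 2 := by
                rw [Finset.sum_congr rfl fun k _ => hsq k, hsb]
        have hnn : 0 ≤ ∑ k : Fin ζ, Real.sqrt (b k) :=
          Finset.sum_nonneg fun k _ => Real.sqrt_nonneg _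
        exact (Real.le_sqrt hnn (by positivity)).mpr hcs'
end

section
/- Let E be an n-dimensional real vector space, let a(·,·) be an inner product on E, and let b(·,·) be a symmetric positive semidefinite bilinear form on E. Suppose (φ₁, …, φ_n) is an a-orthonormal basis of E with b(φ_j, φ_k) = 0 for j ≠ k, and set λ_k := b(φ_k, φ_k), arranged so that λ₁ ≥ λ₂ ≥ … ≥ λ_n ≥ 0. Then for every m with 1 ≤ m < n and every subspace Q ⊆ E with dim Q ≤ m, there exists u ∈ E with a(u, u) = 1 such that b(u − q, u − q) ≥ λ_{m+1} for all q ∈ Q; i.e., the span of the first m eigenvectors is optimal among all m-dimensional subspaces in the sense of the Kolmogorov n-width. -/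
/-- Kolmogorov n-width optimality: for any subspace Q of dimension ≤ m there is a
    unit-a-norm element u whose best approximation error from Q in the seminorm b
    is at least λ_{m+1}. -/
theorem spectral_space_kolmogorov_optimal {E : Type*} [AddCommGroup E] [Module ℝ E]
    (n : ℕ) (a b : E →ₗ[ℝ] E →ₗ[ℝ] ℝ)
    (ha_symm : ∀ x y : E, a x y = a y x)
    (ha_pos : ∀ x : E, x ≠ 0 → 0 < a x x)
    (hb_symm : ∀ x y : E, b x y = b y x)
    (hb_psd : ∀ x : E, 0 ≤ b x x)
    (φ : Fin n → E)
    (ha_ortho : ∀ j k : Fin n, a (φ j) (φ k) = if j = k then 1 else 0)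
    (hspan : Submodule.span ℝ (Set.range φ) = ⊤)
    (hb_diag : ∀ j k : Fin n, j ≠ k → b (φ j) (φ k) = 0)
    (hdecr : ∀ j k : Fin n, j ≤ k → b (φ k) (φ k) ≤ b (φ j) (φ j))
    (m : ℕ) (hm1 : 1 ≤ m) (hmn : m < n)
    (Q : Submodule ℝ E) (hQ : Module.finrank ℝ Q ≤ m) :
    ∃ u : E, a u u = 1 ∧
      ∀ q ∈ Q, b (φ ⟨m, hmn⟩) (φ ⟨m, hmn⟩) ≤ b (u - q) (u - q) := by
  classical
  -- E is finite dimensional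
  haveI : Module.Finite ℝ E :=
    ⟨Submodule.fg_def.mpr ⟨Set.range φ, Set.finite_range φ, hspan⟩⟩
  haveI : FiniteDimensional ℝ Q := inferInstance
  set lm := b (φ ⟨m, hmn⟩) (φ ⟨m, hmn⟩) with hlm
  -- the first m+1 eigenvectors
  set ψ : Fin (m + 1) → E := fun i => φ (Fin.castLE hmn i) with hψ
  -- the linear map c ↦ (q ↦ b (∑ c i • ψ i) q)
  set G := Fintype.linearCombination ℝ ψ with hG
  set F : (Fin (m + 1) → ℝ) →ₗ[ℝ] (Q →ₗ[ℝ] ℝ) := (b.compl₂ Q.subtype).comp G with hF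
  have hnotinj : ¬ Function.Injective F := by
    intro h
    have h1 := LinearMap.finrank_le_finrank_of_injective h
    have h2 : Module.finrank ℝ (Fin (m + 1) → ℝ) = m + 1 := by simp
    have h3 : Module.finrank ℝ (Q →ₗ[ℝ] ℝ) = Module.finrank ℝ Q :=
      Subspace.dual_finrank_eq
    omega
  obtain ⟨c, hc0, hFc⟩ : ∃ c : Fin (m + 1) → ℝ, c ≠ 0 ∧ F c = 0 := by
    rw [Function.not_injective_iff] at hnotinj
    obtain ⟨c₁, c₂, hFeq, hne⟩ := hnotinj
    exact ⟨c₁ - c₂, sub_ne_zero.mpr hne, by rw [map_sub, hFeq, sub_self]⟩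
  set u₀ : E := ∑ i, c i • ψ i with hu₀
  have hbu₀q : ∀ q ∈ Q, b u₀ q = 0 := by
    intro q hq
    have := LinearMap.congr_fun hFc ⟨q, hq⟩
    simpa [hF, hG, Fintype.linearCombination_apply, hu₀] using this
  -- injectivity of castLE on indices
  have hψa : ∀ i j : Fin (m + 1), a (ψ i) (ψ j) = if i = j then 1 else 0 := by
    intro i j
    rw [hψ]
    simp only []
    rw [ha_ortho]
    simp [Fin.castLE_inj]
  have hψb : ∀ i j : Fin (m + 1), i ≠ j → b (ψ i) (ψ j) = 0 := by
    intro i j hij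
    exact hb_diag _ _ (by simpa [Fin.castLE_inj] using hij)
  -- compute a u₀ u₀
  have expand : ∀ B : E →ₗ[ℝ] E →ₗ[ℝ] ℝ,
      B u₀ u₀ = ∑ i, ∑ j, c i * c j * B (ψ i) (ψ j) := by
    intro B
    simp only [hu₀, map_sum, map_smul, LinearMap.sum_apply, LinearMap.smul_apply,
      smul_eq_mul]
    rw [Finset.sum_comm]
    refine Finset.sum_congr rfl fun i _ => ?_
    rw [Finset.mul_sum]
    exact Finset.sum_congr rfl fun j _ => by ring
  have key_a : a u₀ u₀ = ∑ i, c i * c i := by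
    rw [expand a]
    refine Finset.sum_congr rfl fun i _ => ?_
    rw [Finset.sum_eq_single i]
    · rw [hψa]; simp
    · intro j _ hj; rw [hψa]; simp [hj.symm]
    · simp
  have key_b : b u₀ u₀ = ∑ i, c i * c i * b (ψ i) (ψ i) := by
    rw [expand b]
    refine Finset.sum_congr rfl fun i _ => ?_
    rw [Finset.sum_eq_single i]
    · intro j _ hj; rw [hψb i j (Ne.symm hj)]; ring
    · simp
  have hl_le : ∀ i : Fin (m + 1), lm ≤ b (ψ i) (ψ i) := by
    intro i
    refine hdecr _ ⟨m, hmn⟩ ?_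
    simpa [Fin.le_def] using Nat.lt_succ_iff.mp i.isLt
  have hu₀ne : u₀ ≠ 0 := by
    intro h
    apply hc0
    funext i
    have : a u₀ u₀ = 0 := by rw [h]; simp
    rw [key_a] at this
    have hnn : ∀ j ∈ Finset.univ, (0:ℝ) ≤ c j * c j := fun j _ => mul_self_nonneg _
    have := (Finset.sum_eq_zero_iff_of_nonneg hnn).mp this i (Finset.mem_univ i)
    simpa using mul_self_eq_zero.mp this
  have htpos : 0 < a u₀ u₀ := ha_pos _ hu₀ne
  have hbu₀ : lm * a u₀ u₀ ≤ b u₀ u₀ := by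
    rw [key_b, key_a, Finset.mul_sum]
    refine Finset.sum_le_sum fun i _ => ?_
    rw [mul_comm]
    exact mul_le_mul_of_nonneg_left (hl_le i) (mul_self_nonneg _)
  -- normalize
  set s : ℝ := (Real.sqrt (a u₀ u₀))⁻¹ with hs
  have hsq : s * s * a u₀ u₀ = 1 := by
    rw [hs, ← mul_inv]
    rw [Real.mul_self_sqrt htpos.le]
    exact inv_mul_cancel₀ htpos.ne'
  refine ⟨s • u₀, ?_, ?_⟩
  · simp only [map_smul, LinearMap.smul_apply, smul_eq_mul]
    rw [← mul_assoc]; exact hsq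
  · intro q hq
    have hbq : b (s • u₀) q = 0 := by
      simp [map_smul, hbu₀q q hq]
    have hbq' : b q (s • u₀) = 0 := by rw [hb_symm]; exact hbq
    have hexp : b (s • u₀ - q) (s • u₀ - q)
        = b (s • u₀) (s • u₀) + b q q := by
      simp only [map_sub, LinearMap.sub_apply, hbq, hbq']
      ring
    rw [hexp]
    have h1 : lm ≤ b (s • u₀) (s • u₀) := by
      simp only [map_smul, LinearMap.smul_apply, smul_eq_mul]
      calc lm = lm * (s * s * a u₀ u₀) := by rw [hsq, mul_one]
        _ = s * s * (lm * a u₀ u₀) := by ring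
        _ ≤ s * s * b u₀ u₀ := by
            refine mul_le_mul_of_nonneg_left hbu₀ (mul_self_nonneg s)
        _ = s * (s * b u₀ u₀) := by ring
    linarith [hb_psd q]
end
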